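/- arXiv:0808.3489 — 5 statements merged into one kernel-verified Lean document; each statement's English description precedes it below -/
import Mathlib

section
/- Let (a_m) and (c_m) be sequences of non-negative integers satisfying a_m = Σ_{d|m} d·c_d for all m ∈ ℕ. If (a_m) is periodic with period n, then c_m = 0 for all m > n. -/
theorem stmt_0 (a c : ℕ → ℕ) (n : ℕ) (hn : 0 < n)
    (hac : ∀ m : ℕ, 0 < m → a m = ∑ d ∈ m.divisors, d * c d)
    (hper : ∀ m : ℕ, 0 < m → a (m + n) = a m) :
    ∀ m : ℕ, n < m → c m = 0 := by
  intro m hm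
  have hmpos : 0 < m := lt_trans hn hm
  -- a (k*n) = a n for k ≥ 1
  have hkn : ∀ k : ℕ, a ((k + 1) * n) = a n := by
    intro k
    induction k with
    | zero => simp
    | succ k ih =>
      have : (k + 1 + 1) * n = (k + 1) * n + n := by ring
      rw [this, hper _ (by positivity), ih]
  have hmn : a (m * n) = a n := by
    obtain ⟨k, rfl⟩ := Nat.exists_eq_add_of_lt hmpos
    simpa [Nat.add_comm] using hkn k
  have hmnpos : 0 < m * n := Nat.mul_pos hmpos hn
  have hsub : insert m n.divisors ⊆ (m * n).divisors := by
    intro d hd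
    rcases Finset.mem_insert.mp hd with rfl | hd
    · exact Nat.mem_divisors.mpr ⟨Dvd.intro n rfl, hmnpos.ne'⟩
    · exact Nat.mem_divisors.mpr ⟨(Nat.mem_divisors.mp hd).1.mul_left m, hmnpos.ne'⟩
  have hnotmem : m ∉ n.divisors := by
    intro h
    exact absurd (Nat.le_of_dvd hn (Nat.mem_divisors.mp h).1) (not_le.mpr hm)
  have hle : ∑ d ∈ insert m n.divisors, d * c d ≤ ∑ d ∈ (m * n).divisors, d * c d :=
    Finset.sum_le_sum_of_subset hsub
  rw [Finset.sum_insert hnotmem, ← hac _ hmnpos, hmn, hac _ hn] at hle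
  have : m * c m = 0 := by omega
  exact (Nat.mul_eq_zero.mp this).resolve_left hmpos.ne'
end

section
/- Let M be a nonsingular 2×2 complex matrix with D = det M, T = trace M, and let (p_m) satisfy p₀ = 0, p₁ = 1, p_{m+1} = T·p_m - D·p_{m-1}. Then for all m ≥ 1, det(M^m - 𝟙) = -p_{m+1} + D·p_{m-1} + D^m + 1. -/
open Matrix

private lemma ch2 (M : Matrix (Fin 2) (Fin 2) ℂ) :
    M ^ 2 = M.trace • M - M.det • (1 : Matrix (Fin 2) (Fin 2) ℂ) := by
  ext i j
  fin_cases i <;> fin_cases j <;>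
    simp [pow_two, Matrix.mul_apply, Fin.sum_univ_two, Matrix.trace_fin_two,
      Matrix.det_fin_two, Matrix.one_apply] <;> ring

private lemma det_sub_one (A : Matrix (Fin 2) (Fin 2) ℂ) :
    (A - 1).det = A.det - A.trace + 1 := by
  simp [Matrix.det_fin_two, Matrix.trace_fin_two, Matrix.sub_apply, Matrix.one_apply]
  ring

private lemma trace_pow (M : Matrix (Fin 2) (Fin 2) ℂ)
    (p : ℕ → ℂ) (h0 : p 0 = 0) (h1 : p 1 = 1)
    (hrec : ∀ m : ℕ, 1 ≤ m → p (m + 1) = M.trace * p m - M.det * p (m - 1)) :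
    ∀ n : ℕ, (M ^ (n + 1)).trace = p (n + 2) - M.det * p n
  | 0 => by
    have h2 := hrec 1 le_rfl
    simp [h0, h1] at h2 ⊢
    simp [h2]
  | 1 => by
    have h2 := hrec 1 le_rfl
    have h3 := hrec 2 (by norm_num)
    simp [h0, h1] at h2 h3
    rw [ch2]
    simp [h3, h2, h1, Matrix.trace_smul, Matrix.trace_one]
    ring
  | (n + 2) => by
    have ih1 := trace_pow M p h0 h1 hrec n
    have ih2 := trace_pow M p h0 h1 hrec (n + 1)
    have key : M ^ (n + 3) = M.trace • M ^ (n + 2) - M.det • M ^ (n + 1) := by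
      rw [show n + 3 = (n + 1) + 2 from rfl, pow_add, ch2, Matrix.mul_sub, Matrix.mul_smul, Matrix.mul_smul, Matrix.mul_one,
        ← pow_succ]
    have hr1 := hrec (n + 1) (by omega)
    have hr2 := hrec (n + 3) (by omega)
    simp at hr1 hr2
    rw [key]
    simp [Matrix.trace_sub, Matrix.trace_smul, ih1, ih2, hr1, hr2, smul_eq_mul]
    ring

theorem stmt_6 (M : Matrix (Fin 2) (Fin 2) ℂ) (hD : M.det ≠ 0)
    (p : ℕ → ℂ) (h0 : p 0 = 0) (h1 : p 1 = 1)
    (hrec : ∀ m : ℕ, 1 ≤ m → p (m + 1) = M.trace * p m - M.det * p (m - 1)) :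
    ∀ m : ℕ, 1 ≤ m →
      (M ^ m - 1).det = -p (m + 1) + M.det * p (m - 1) + M.det ^ m + 1 := by
  intro m hm
  obtain ⟨n, rfl⟩ : ∃ n, m = n + 1 := ⟨m - 1, by omega⟩
  rw [det_sub_one, Matrix.det_pow, trace_pow M p h0 h1 hrec n]
  simp
  ring
end

section
/- If M, M' ∈ Mat(2,ℤ) are conjugate by a matrix A ∈ GL(2,ℤ), i.e. M' = A M A^{-1}, then mgcd(M') = mgcd(M). -/
def mgcd (M : Matrix (Fin 2) (Fin 2) ℤ) : ℕ :=
  Int.gcd (M 0 1) (Int.gcd (M 1 0) (M 1 1 - M 0 0))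

lemma entries_dvd_mul (n : ℤ) (A N B : Matrix (Fin 2) (Fin 2) ℤ)
    (h : ∀ i j, n ∣ N i j) : ∀ i j, n ∣ (A * N * B) i j := by
  intro i j
  rw [Matrix.mul_apply]
  refine Finset.dvd_sum fun l _ => ?_
  rw [Matrix.mul_apply]
  rw [Finset.sum_mul]
  refine Finset.dvd_sum fun k _ => ?_
  exact Dvd.dvd.mul_right (Dvd.dvd.mul_left (h k l) _) _

lemma key (n : ℕ) (M M' A : Matrix (Fin 2) (Fin 2) ℤ)
    (hA : A.det = 1 ∨ A.det = -1) (hconj : M' = A * M * A⁻¹)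
    (h : n ∣ mgcd M) : n ∣ mgcd M' := by
  have hu : IsUnit A.det := by
    rcases hA with h1 | h1 <;> rw [h1] <;> simp
  have hcast : ((n : ℤ)) ∣ ((mgcd M : ℕ) : ℤ) := Int.natCast_dvd_natCast.mpr h
  have h1 : (n : ℤ) ∣ M 0 1 := dvd_trans hcast (Int.gcd_dvd_left (M 0 1) _)
  have hinner : (n : ℤ) ∣ ((Int.gcd (M 1 0) (M 1 1 - M 0 0) : ℕ) : ℤ) :=
    dvd_trans hcast (Int.gcd_dvd_right (M 0 1) _)
  have h2 : (n : ℤ) ∣ M 1 0 := dvd_trans hinner (Int.gcd_dvd_left (M 1 0) (M 1 1 - M 0 0))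
  have h3 : (n : ℤ) ∣ M 1 1 - M 0 0 := dvd_trans hinner (Int.gcd_dvd_right (M 1 0) (M 1 1 - M 0 0))
  have esub : ∀ (P : Matrix (Fin 2) (Fin 2) ℤ) (i j : Fin 2),
      (P - (M 0 0) • 1) i j = P i j - if i = j then M 0 0 else 0 := by
    intro P i j
    simp only [Matrix.sub_apply, Matrix.smul_apply, Matrix.one_apply, smul_eq_mul,
      mul_ite, mul_one, mul_zero]
  set N : Matrix (Fin 2) (Fin 2) ℤ := M - (M 0 0) • 1 with hN
  have hNdvd : ∀ i j, (n : ℤ) ∣ N i j := by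
    intro i j
    rw [hN, esub]
    fin_cases i <;> fin_cases j
    · simp
    · simpa using h1
    · simpa using h2
    · simpa using h3
  have hM' : M' - (M 0 0) • 1 = A * N * A⁻¹ := by
    rw [hconj, hN]
    rw [Matrix.mul_sub, Matrix.sub_mul]
    congr 1
    rw [Matrix.mul_smul, Matrix.smul_mul, Matrix.mul_one, Matrix.mul_nonsing_inv A hu]
  have hdvd : ∀ i j, (n : ℤ) ∣ (M' - (M 0 0) • 1) i j := by
    rw [hM']; exact entries_dvd_mul _ _ _ _ hNdvd
  have g1 : (n : ℤ) ∣ M' 0 1 := by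
    have := hdvd 0 1; rw [esub] at this; simpa using this
  have g2 : (n : ℤ) ∣ M' 1 0 := by
    have := hdvd 1 0; rw [esub] at this; simpa using this
  have g3 : (n : ℤ) ∣ M' 1 1 - M 0 0 := by
    have := hdvd 1 1; rw [esub] at this; simpa using this
  have g0 : (n : ℤ) ∣ M' 0 0 - M 0 0 := by
    have := hdvd 0 0; rw [esub] at this; simpa using this
  have g4 : (n : ℤ) ∣ M' 1 1 - M' 0 0 := by
    have := dvd_sub g3 g0
    simpa using this
  unfold mgcd
  exact Nat.dvd_gcd (Int.natAbs_dvd_natAbs.mpr g1)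
    (Nat.dvd_gcd (Int.natAbs_dvd_natAbs.mpr g2) (Int.natAbs_dvd_natAbs.mpr g4))

theorem stmt_16 (M M' A : Matrix (Fin 2) (Fin 2) ℤ)
    (hA : A.det = 1 ∨ A.det = -1) (hconj : M' = A * M * A⁻¹) :
    mgcd M' = mgcd M := by
  have hu : IsUnit A.det := by
    rcases hA with h1 | h1 <;> rw [h1] <;> simp
  have hAinv : (A⁻¹).det = 1 ∨ (A⁻¹).det = -1 := by
    rw [Matrix.det_nonsing_inv]
    rcases hA with h1 | h1 <;> rw [h1]
    · left; exact Ring.inverse_one _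
    · right
      have : Ring.inverse (-1 : ℤ) * (-1 : ℤ) = 1 :=
        Ring.inverse_mul_cancel _ (by simp)
      linarith
  have hback : M = A⁻¹ * M' * (A⁻¹)⁻¹ := by
    rw [Matrix.nonsing_inv_nonsing_inv A hu, hconj, Matrix.mul_assoc A M A⁻¹,
      Matrix.nonsing_inv_mul_cancel_left A _ hu, Matrix.mul_assoc,
      Matrix.nonsing_inv_mul A hu, Matrix.mul_one]
  exact Nat.dvd_antisymm
    (key _ M' M A⁻¹ hAinv hback dvd_rfl)
    (key _ M M' A hA hconj dvd_rfl)
end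

section
/- Let M = [[a,b],[c,d]] and M' = [[a',b'],[c',d']] be 2×2 integer matrices with det M = det M', trace M = trace M', and mgcd(M) = mgcd(M') = r ∈ ℕ (r ≥ 1). Then r divides d - d'. -/
theorem stmt_18 (a b c d a' b' c' d' : ℤ) (r : ℕ) (hr : 1 ≤ r)
    (hdet : a * d - b * c = a' * d' - b' * c')
    (htr : a + d = a' + d')
    (hm : Int.gcd b (Int.gcd c (d - a)) = r)
    (hm' : Int.gcd b' (Int.gcd c' (d' - a')) = r) :
    (r : ℤ) ∣ d - d' := by
  have hb : (r:ℤ) ∣ b := by rw [← hm]; exact Int.gcd_dvd_left _ _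
  have hc : (r:ℤ) ∣ c := by
    rw [← hm]; exact dvd_trans (Int.gcd_dvd_right _ _) (Int.gcd_dvd_left _ _)
  have hda : (r:ℤ) ∣ d - a := by
    rw [← hm]; exact dvd_trans (Int.gcd_dvd_right _ _) (Int.gcd_dvd_right _ _)
  have hb' : (r:ℤ) ∣ b' := by rw [← hm']; exact Int.gcd_dvd_left _ _
  have hc' : (r:ℤ) ∣ c' := by
    rw [← hm']; exact dvd_trans (Int.gcd_dvd_right _ _) (Int.gcd_dvd_left _ _)
  have hda' : (r:ℤ) ∣ d' - a' := by
    rw [← hm']; exact dvd_trans (Int.gcd_dvd_right _ _) (Int.gcd_dvd_right _ _)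
  have hrne : (r:ℤ) ≠ 0 := by positivity
  have h2x : (r:ℤ) ∣ 2*(a - a') := by
    have h := dvd_sub hda' hda
    have e : (d' - a') - (d - a) = 2*(a - a') := by linarith
    rwa [e] at h
  obtain ⟨m, hmm⟩ := hda
  obtain ⟨k, hk⟩ := h2x
  have hr2 : (r:ℤ)^2 ∣ (a-a')*(d-a) + (a-a')^2 := by
    have hbc : (r:ℤ)^2 ∣ b*c := by rw [sq]; exact mul_dvd_mul hb hc
    have hbc' : (r:ℤ)^2 ∣ b'*c' := by rw [sq]; exact mul_dvd_mul hb' hc'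
    have e : (a-a')*(d-a) + (a-a')^2 = b*c - b'*c' := by linear_combination hdet - a'*htr
    rw [e]; exact dvd_sub hbc hbc'
  obtain ⟨s, hs⟩ := hr2
  have key : (r:ℤ)^2 * (4*s) = (r:ℤ)^2 * (2*k*m + k^2) := by
    linear_combination (-4)*hs + (2*(a-a') + (r:ℤ)*k + 2*(r:ℤ)*m)*hk + 4*(a-a')*hmm
  have canc : (4:ℤ)*s = 2*k*m + k^2 :=
    mul_left_cancel₀ (pow_ne_zero 2 hrne) key
  rcases Int.even_or_odd k with ⟨j, hj⟩ | ⟨t, ht⟩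
  · have hx : a - a' = (r:ℤ)*j := by
      have h2 : 2*(a - a') = 2*((r:ℤ)*j) := by rw [hk, hj]; ring
      linarith
    exact ⟨-j, by linarith⟩
  · exfalso
    have h4s : 4*s = 4*(t*m) + 2*m + 4*(t*t) + 4*t + 1 := by
      rw [canc, ht]; ring
    obtain ⟨u, hu⟩ : ∃ u, u = t*m := ⟨_, rfl⟩
    obtain ⟨v, hv⟩ : ∃ v, v = t*t := ⟨_, rfl⟩
    rw [← hu, ← hv] at h4s
    omega
end

section
/- Let M, M' ∈ Mat(2,ℤ) and n ≥ 2. If the reductions of M and M' mod n are conjugate by a unit of Mat(2, ℤ/nℤ), then det M ≡ det M' (mod n), trace M ≡ trace M' (mod n), and the matrix gcds r = mgcd(M), r' = mgcd(M') generate the same ideal in ℤ/nℤ, i.e. r·(ℤ/nℤ) = r'·(ℤ/nℤ). -/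
section aux

variable {R : Type*} [CommRing R]

lemma aux_entries_mem (J : Ideal R) (A N B : Matrix (Fin 2) (Fin 2) R)
    (h : ∀ i j, N i j ∈ J) (i j : Fin 2) : (A * N * B) i j ∈ J := by
  rw [Matrix.mul_apply]
  refine Ideal.sum_mem _ fun l _ => ?_
  rw [Matrix.mul_apply, Finset.sum_mul]
  exact Ideal.sum_mem _ fun k _ =>
    Ideal.mul_mem_right _ _ (Ideal.mul_mem_left _ _ (h k l))

lemma aux_span_le (A B M M' : Matrix (Fin 2) (Fin 2) R) (hAB : A * B = 1)
    (h : M' = A * M * B) :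
    Ideal.span {M' 0 1, M' 1 0, M' 1 1 - M' 0 0} ≤
      Ideal.span {M 0 1, M 1 0, M 1 1 - M 0 0} := by
  set J := Ideal.span ({M 0 1, M 1 0, M 1 1 - M 0 0} : Set R) with hJ
  have h01 : M 0 1 ∈ J := Ideal.subset_span (by simp)
  have h10 : M 1 0 ∈ J := Ideal.subset_span (by simp)
  have h11 : M 1 1 - M 0 0 ∈ J := Ideal.subset_span (by simp)
  set N : Matrix (Fin 2) (Fin 2) R := M - M 0 0 • 1 with hN
  have hNmem : ∀ i j, N i j ∈ J := by
    intro i j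
    fin_cases i <;> fin_cases j <;>
      simp [hN, Matrix.sub_apply, Matrix.smul_apply, Matrix.one_apply] <;>
      first
      | exact h01 | exact h10 | exact h11
      | simpa using J.zero_mem
  have key : A * N * B = M' - M 0 0 • 1 := by
    rw [hN, h]
    rw [Matrix.mul_sub, Matrix.sub_mul, Matrix.mul_smul, Matrix.mul_one,
      Matrix.smul_mul, hAB]
  have hmem : ∀ i j, (M' - M 0 0 • 1) i j ∈ J := by
    rw [← key]; exact aux_entries_mem J A N B hNmem
  have e01 : M' 0 1 = (M' - M 0 0 • 1) 0 1 := by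
    simp [Matrix.sub_apply, Matrix.smul_apply, Matrix.one_apply]
  have e10 : M' 1 0 = (M' - M 0 0 • 1) 1 0 := by
    simp [Matrix.sub_apply, Matrix.smul_apply, Matrix.one_apply]
  have e11 : M' 1 1 - M' 0 0 =
      (M' - M 0 0 • 1) 1 1 - (M' - M 0 0 • 1) 0 0 := by
    simp [Matrix.sub_apply, Matrix.smul_apply, Matrix.one_apply]
  rw [Ideal.span_le]
  rintro x hx
  simp only [Set.mem_insert_iff, Set.mem_singleton_iff] at hx
  rcases hx with rfl | rfl | rfl
  · rw [e01]; exact hmem 0 1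
  · rw [e10]; exact hmem 1 0
  · rw [e11]; exact J.sub_mem (hmem 1 1) (hmem 0 0)

end aux

lemma aux_span_mgcd (M : Matrix (Fin 2) (Fin 2) ℤ) (n : ℕ) :
    Ideal.span {((mgcd M : ZMod n))} =
      Ideal.span ({(M 0 1 : ZMod n), (M 1 0 : ZMod n),
        ((M 1 1 : ZMod n) - (M 0 0 : ZMod n))} : Set (ZMod n)) := by
  have hZ : Ideal.span ({((mgcd M : ℤ))} : Set ℤ) =
      Ideal.span ({M 0 1, M 1 0, M 1 1 - M 0 0} : Set ℤ) := by
    have h1 : Ideal.span ({M 1 0, M 1 1 - M 0 0} : Set ℤ) =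
        Ideal.span {((Int.gcd (M 1 0) (M 1 1 - M 0 0) : ℤ))} := by
      rw [Int.coe_gcd, span_gcd]
    rw [show ({M 0 1, M 1 0, M 1 1 - M 0 0} : Set ℤ) =
        insert (M 0 1) {M 1 0, M 1 1 - M 0 0} from rfl,
      Ideal.span_insert, h1, ← Ideal.span_insert,
      show (insert (M 0 1) {((Int.gcd (M 1 0) (M 1 1 - M 0 0) : ℤ))} : Set ℤ) =
        {M 0 1, ((Int.gcd (M 1 0) (M 1 1 - M 0 0) : ℤ))} from rfl,
      ← span_gcd, mgcd]
    simp [Int.coe_gcd]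
  have := congrArg (Ideal.map (Int.castRingHom (ZMod n))) hZ
  rw [Ideal.map_span, Ideal.map_span] at this
  simpa [Set.image_insert_eq, Set.image_singleton] using this

theorem stmt_19 (M M' : Matrix (Fin 2) (Fin 2) ℤ) (n : ℕ) (hn : 2 ≤ n)
    (hconj : ∃ A : Matrix (Fin 2) (Fin 2) (ZMod n), IsUnit A ∧
      A * M.map (Int.cast : ℤ → ZMod n) = M'.map (Int.cast : ℤ → ZMod n) * A) :
    ((M.det : ZMod n) = (M'.det : ZMod n)) ∧
    ((M.trace : ZMod n) = (M'.trace : ZMod n)) ∧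
    Ideal.span {((mgcd M : ZMod n))} = Ideal.span {((mgcd M' : ZMod n))} := by
  obtain ⟨A, hA, hcomm⟩ := hconj
  obtain ⟨u, rfl⟩ := hA
  set Mr := M.map (Int.cast : ℤ → ZMod n) with hMr
  set Mr' := M'.map (Int.cast : ℤ → ZMod n) with hMr'
  set A : Matrix (Fin 2) (Fin 2) (ZMod n) := (u : Matrix (Fin 2) (Fin 2) (ZMod n))
  set B : Matrix (Fin 2) (Fin 2) (ZMod n) := ((u⁻¹ : _) : Matrix (Fin 2) (Fin 2) (ZMod n))
  have hAB : A * B = 1 := by simp [A, B, ← Units.val_mul]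
  have hBA : B * A = 1 := by simp [A, B, ← Units.val_mul]
  have hM' : Mr' = A * Mr * B := by
    calc Mr' = Mr' * (A * B) := by rw [hAB, Matrix.mul_one]
    _ = (Mr' * A) * B := by rw [Matrix.mul_assoc]
    _ = (A * Mr) * B := by rw [hcomm]
  have hM : Mr = B * Mr' * A := by
    calc Mr = (B * A) * Mr := by rw [hBA, Matrix.one_mul]
    _ = B * (A * Mr) := by rw [Matrix.mul_assoc]
    _ = B * (Mr' * A) := by rw [hcomm]
    _ = B * Mr' * A := by rw [Matrix.mul_assoc]
  refine ⟨?_, ?_, ?_⟩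
  · have h1 : (M.det : ZMod n) = Mr.det := by
      simp [hMr, Matrix.det_fin_two, Matrix.map_apply]
    have h2 : (M'.det : ZMod n) = Mr'.det := by
      simp [hMr', Matrix.det_fin_two, Matrix.map_apply]
    rw [h1, h2, hM', Matrix.det_mul, Matrix.det_mul]
    have : A.det * B.det = 1 := by rw [← Matrix.det_mul, hAB, Matrix.det_one]
    calc Mr.det = Mr.det * (A.det * B.det) := by rw [this, mul_one]
    _ = A.det * Mr.det * B.det := by ring
  · have h1 : (M.trace : ZMod n) = Mr.trace := by
      simp [hMr, Matrix.trace_fin_two, Matrix.map_apply]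
    have h2 : (M'.trace : ZMod n) = Mr'.trace := by
      simp [hMr', Matrix.trace_fin_two, Matrix.map_apply]
    rw [h1, h2, hM', Matrix.trace_mul_comm, ← Matrix.mul_assoc, hBA,
      Matrix.one_mul]
  · have kM := aux_span_mgcd M n
    have kM' := aux_span_mgcd M' n
    have eM : ∀ i j, Mr i j = ((M i j : ZMod n)) := fun i j => rfl
    rw [kM, kM']
    have le1 := aux_span_le A B Mr Mr' hAB hM'
    have le2 := aux_span_le B A Mr' Mr hBA hM
    simp only [eM] at le1 le2
    exact le_antisymm le2 le1
end
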